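/- The functor φ : Glid FR → Prefrag FR is fully faithful and admits a left adjoint ψ := Q∘j_L. -/

import Mathlib

set_option linter.unusedSectionVars false
set_option maxHeartbeats 1000000
set_option synthInstance.maxHeartbeats 1000000
set_option maxHeartbeats 2000000

noncomputable section

open CategoryTheory CategoryTheory.Limits

universe u

namespace GliderPaper

/-- A `Γ`-filtration `FR` on a unital ring `R`: additive subgroups `F γ` with
`1 ∈ F 1`, monotone in `γ`, and multiplicative. -/
structure RingFiltration (Γ : Type u) [Group Γ] [PartialOrder Γ] (R : Type u) [Ring R] where
  F : Γ → AddSubgroup R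
  one_mem : (1 : R) ∈ F 1
  mono : ∀ {α β : Γ}, α ≤ β → F α ≤ F β
  mul_mem : ∀ {α β : Γ} {a b : R}, a ∈ F α → b ∈ F β → a * b ∈ F (α * β)

variable {Γ : Type u} [Group Γ] [PartialOrder Γ]
  [CovariantClass Γ Γ (· * ·) (· ≤ ·)] [CovariantClass Γ Γ (Function.swap (· * ·)) (· ≤ ·)]
  {R : Type u} [Ring R]

/-- Objects of the extended filtered companion category `oFF_Λ R`:
the disjoint union `Λ ⊔ {∞}`. -/
inductive OFF (FR : RingFiltration Γ R) (Λ : Set Γ) : Type u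
  | of (α : Λ)
  | infty

/-- Objects of the filtered companion category `FF_Λ R`: the set `Λ`. -/
inductive FF (FR : RingFiltration Γ R) (Λ : Set Γ) : Type u
  | of (α : Λ)

variable (FR : RingFiltration Γ R) (Λ : Set Γ)

namespace OFF

/-- `le X Y` holds iff the canonical morphism `1_{X,Y}` is defined, i.e. `X ≤ Y` in `Λ`,
or `Y = ∞`. -/
def le : OFF FR Λ → OFF FR Λ → Prop
  | of α, of β => (α : Γ) ≤ (β : Γ)
  | _, infty => True
  | infty, of _ => False

open scoped Classical in
/-- The additive subgroup of `R` of morphisms `X ⟶ Y` in `oFF_Λ R`: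
`Hom(α,β) = F_{βα⁻¹}R` for `α ≤ β` in `Λ`, `Hom(X,∞) = R`, and `0` otherwise. -/
noncomputable def homGrp : OFF FR Λ → OFF FR Λ → AddSubgroup R
  | of α, of β => if (α : Γ) ≤ (β : Γ) then FR.F ((β : Γ) * (α : Γ)⁻¹) else ⊥
  | _, infty => ⊤
  | infty, of _ => ⊥

theorem le_refl' : ∀ X : OFF FR Λ, le FR Λ X X
  | of _ => _root_.le_refl _
  | infty => trivial

theorem one_mem_homGrp : ∀ {X Y : OFF FR Λ}, le FR Λ X Y → (1 : R) ∈ homGrp FR Λ X Y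
  | of α, of β, h => by
      have h' : (α : Γ) ≤ (β : Γ) := h
      have h1 : (1 : Γ) ≤ (β : Γ) * (α : Γ)⁻¹ := by
        rw [← mul_inv_cancel (α : Γ)]
        exact mul_le_mul_left h' _
      simpa [homGrp, if_pos h'] using FR.mono h1 FR.one_mem
  | of _, infty, _ => trivial
  | infty, infty, _ => trivial
  | infty, of _, h => h.elim

theorem mul_mem_homGrp : ∀ {X Y Z : OFF FR Λ} {f g : R},
    f ∈ homGrp FR Λ X Y → g ∈ homGrp FR Λ Y Z → g * f ∈ homGrp FR Λ X Z := by
  intro X Y Z f g hf hg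
  cases X <;> cases Y <;> cases Z <;> simp only [homGrp] at hf hg ⊢ <;> try trivial
  case of.of.of a b c =>
    by_cases hab : (a : Γ) ≤ (b : Γ)
    · by_cases hbc : (b : Γ) ≤ (c : Γ)
      · rw [if_pos hab] at hf
        rw [if_pos hbc] at hg
        rw [if_pos (le_trans hab hbc)]
        have := FR.mul_mem hg hf
        rwa [show (c : Γ) * (b : Γ)⁻¹ * ((b : Γ) * (a : Γ)⁻¹) = (c : Γ) * (a : Γ)⁻¹ by
          group] at this
      · rw [if_neg hbc] at hg
        rw [AddSubgroup.mem_bot] at hg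
        subst hg
        simp only [zero_mul]
        exact AddSubgroup.zero_mem _
    · rw [if_neg hab] at hf
      rw [AddSubgroup.mem_bot] at hf
      subst hf
      simp only [mul_zero]
      exact AddSubgroup.zero_mem _
  case of.infty.of a c =>
    rw [AddSubgroup.mem_bot] at hg
    subst hg
    simp only [zero_mul]
    exact AddSubgroup.zero_mem _
  case infty.of.of b c =>
    rw [AddSubgroup.mem_bot] at hf
    subst hf
    simp only [mul_zero]
    exact AddSubgroup.zero_mem _
  case infty.infty.of c =>
    rw [AddSubgroup.mem_bot] at hg
    subst hg
    simp only [zero_mul]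
    exact AddSubgroup.zero_mem _

instance : Category (OFF FR Λ) where
  Hom X Y := homGrp FR Λ X Y
  id X := ⟨1, one_mem_homGrp FR Λ (le_refl' FR Λ X)⟩
  comp f g := ⟨g.1 * f.1, mul_mem_homGrp FR Λ f.2 g.2⟩
  id_comp f := Subtype.ext (mul_one f.1)
  comp_id f := Subtype.ext (one_mul f.1)
  assoc f g h := Subtype.ext (mul_assoc h.1 g.1 f.1).symm

instance : Preadditive (OFF FR Λ) where
  homGroup X Y := inferInstanceAs (AddCommGroup (homGrp FR Λ X Y))
  add_comp _ _ _ f f' g := Subtype.ext (mul_add g.1 f.1 f'.1)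
  comp_add _ _ _ f g g' := Subtype.ext (add_mul g.1 g'.1 f.1)

end OFF

namespace FF

/-- The inclusion of the objects of `FF_Λ R` into those of `oFF_Λ R`. -/
def toOFF : FF FR Λ → OFF FR Λ
  | of α => .of α

instance : Category (FF FR Λ) where
  Hom X Y := OFF.homGrp FR Λ (toOFF FR Λ X) (toOFF FR Λ Y)
  id X := ⟨1, OFF.one_mem_homGrp FR Λ (OFF.le_refl' FR Λ _)⟩
  comp f g := ⟨g.1 * f.1, OFF.mul_mem_homGrp FR Λ f.2 g.2⟩
  id_comp f := Subtype.ext (mul_one f.1)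
  comp_id f := Subtype.ext (one_mul f.1)
  assoc f g h := Subtype.ext (mul_assoc h.1 g.1 f.1).symm

instance : Preadditive (FF FR Λ) where
  homGroup X Y := inferInstanceAs (AddCommGroup (OFF.homGrp FR Λ (toOFF FR Λ X) (toOFF FR Λ Y)))
  add_comp _ _ _ f f' g := Subtype.ext (mul_add g.1 f.1 f'.1)
  comp_add _ _ _ f g g' := Subtype.ext (add_mul g.1 g'.1 f.1)

end FF

/-- The inclusion functor `j : FF_Λ R ⥤ oFF_Λ R`. -/
def jF : FF FR Λ ⥤ OFF FR Λ where
  obj := FF.toOFF FR Λ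
  map f := f
  map_id _ := rfl
  map_comp _ _ := rfl

instance : (jF FR Λ).Additive := ⟨rfl⟩

/-- `Mod C`: the category of additive functors from `C` to abelian groups. -/
abbrev Mod (C : Type u) [Category.{u} C] [Preadditive C] : Type (u + 1) :=
  C ⥤+ AddCommGrpCat.{u}

/-- The component at `X` of a morphism in `Mod C`. -/
def mapp {C : Type u} [Category.{u} C] [Preadditive C] {M N : Mod C} (f : M ⟶ N) (X : C) :
    M.obj.obj X ⟶ N.obj.obj X :=
  (show M.obj ⟶ N.obj from f.hom).app X

/-- The canonical morphism `1_{X,Y}` in `oFF_Λ R`, given by `1_R`. -/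
def unitHom (X Y : OFF FR Λ) (h : OFF.le FR Λ X Y) : X ⟶ Y :=
  ⟨1, OFF.one_mem_homGrp FR Λ h⟩

/-- The canonical morphism `1_{α,β}` in `FF_Λ R`, given by `1_R`. -/
def unitHomFF (α β : Λ) (h : (α : Γ) ≤ (β : Γ)) : (FF.of α : FF FR Λ) ⟶ FF.of β :=
  unitHom FR Λ (.of α) (.of β) h

/-- A module `M` over `oFF_Λ R` is a preglider if all the maps `M(1_{X,Y})` are injective. -/
def IsPreglider (M : Mod (OFF FR Λ)) : Prop :=
  ∀ (X Y : OFF FR Λ) (h : OFF.le FR Λ X Y), Function.Injective (M.obj.map (unitHom FR Λ X Y h))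

/-- A module `M` over `FF_Λ R` is a prefragment if all the maps `M(1_{α,β})` are injective. -/
def IsPrefragment (M : Mod (FF FR Λ)) : Prop :=
  ∀ (α β : Λ) (h : (α : Γ) ≤ (β : Γ)), Function.Injective (M.obj.map (unitHomFF FR Λ α β h))

/-- The category of pregliders: the full subcategory of `Mod (oFF_Λ R)` of pregliders. -/
abbrev Preglid : Type (u + 1) :=
  ObjectProperty.FullSubcategory (fun M : Mod (OFF FR Λ) => IsPreglider FR Λ M)

instance : Preadditive (Preglid FR Λ) := Preadditive.fullSubcategory _

/-- The category of prefragments: the full subcategory of `Mod (FF_Λ R)` of prefragments. -/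
abbrev Prefrag : Type (u + 1) :=
  ObjectProperty.FullSubcategory (fun M : Mod (FF FR Λ) => IsPrefragment FR Λ M)

instance : Preadditive (Prefrag FR Λ) := Preadditive.fullSubcategory _

/-- The inclusion `Preglid FR Λ ⥤ Mod (oFF_Λ R)`. -/
def iotaF : Preglid FR Λ ⥤ Mod (OFF FR Λ) := ObjectProperty.ι _

/-- The inclusion `Prefrag FR Λ ⥤ Mod (FF_Λ R)`. -/
def etaF : Prefrag FR Λ ⥤ Mod (FF FR Λ) := ObjectProperty.ι _

/-- The component at `X` of a morphism of pregliders. -/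
def pgapp {M N : Preglid FR Λ} (f : M ⟶ N) (X : OFF FR Λ) :
    M.obj.obj.obj X ⟶ N.obj.obj.obj X :=
  mapp (show M.obj ⟶ N.obj from f.hom) X

/-- The component at `X` of a morphism of prefragments. -/
def pfapp {M N : Prefrag FR Λ} (f : M ⟶ N) (X : FF FR Λ) :
    M.obj.obj.obj X ⟶ N.obj.obj.obj X :=
  mapp (show M.obj ⟶ N.obj from f.hom) X

/-- The class `Σ` of morphisms of pregliders all of whose components at objects of `Λ`
are isomorphisms. -/
def SigmaClass : MorphismProperty (Preglid FR Λ) :=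
  fun _ _ f => ∀ α : Λ, IsIso (pgapp FR Λ f (.of α))

/-- The category of glider representations: the localization of `Preglid FR Λ` at `Σ`. -/
abbrev Glid : Type (u + 1) := (SigmaClass FR Λ).Localization

/-- The localization functor `Q : Preglid FR Λ ⥤ Glid FR Λ`. -/
def QF : Preglid FR Λ ⥤ Glid FR Λ := (SigmaClass FR Λ).Q

/-- The restriction functor `j^* : Mod (oFF_Λ R) ⥤ Mod (FF_Λ R)`. -/
def jStar : Mod (OFF FR Λ) ⥤ Mod (FF FR Λ) where
  obj M := ⟨jF FR Λ ⋙ M.obj, by haveI : M.obj.Additive := M.property; exact (inferInstance : (jF FR Λ ⋙ M.obj).Additive)⟩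
  map {M N} f := ⟨Functor.whiskerLeft (jF FR Λ) (show M.obj ⟶ N.obj from f.hom)⟩
  map_id _ := rfl
  map_comp _ _ := rfl

theorem isPrefragment_jStar (M : Mod (OFF FR Λ)) (hM : IsPreglider FR Λ M) :
    IsPrefragment FR Λ ((jStar FR Λ).obj M) :=
  fun α β h => hM (.of α) (.of β) h

/-- The restriction functor `j^* : Preglid FR Λ ⥤ Prefrag FR Λ`. -/
def jRes : Preglid FR Λ ⥤ Prefrag FR Λ where
  obj M := ⟨(jStar FR Λ).obj M.obj, isPrefragment_jStar FR Λ M.obj M.property⟩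
  map f := ⟨(jStar FR Λ).map f.hom⟩
  map_id M := InducedCategory.hom_ext ((jStar FR Λ).map_id M.obj)
  map_comp f g := InducedCategory.hom_ext ((jStar FR Λ).map_comp f.hom g.hom)

theorem sigma_isInvertedBy : (SigmaClass FR Λ).IsInvertedBy (jRes FR Λ) := by
  intro M N f hf
  haveI : (AdditiveFunctor.forget (FF FR Λ) AddCommGrpCat.{u}).Faithful :=
    ObjectProperty.faithful_ι _
  haveI : ∀ X : FF FR Λ, IsIso
      (((ObjectProperty.ι (fun M : Mod (FF FR Λ) => IsPrefragment FR Λ M) ⋙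
        AdditiveFunctor.forget _ _).map ((jRes FR Λ).map f)).app X) := by
    rintro ⟨α⟩
    exact hf α
  haveI : IsIso ((ObjectProperty.ι (fun M : Mod (FF FR Λ) => IsPrefragment FR Λ M) ⋙
      AdditiveFunctor.forget _ _).map ((jRes FR Λ).map f)) :=
    NatIso.isIso_of_isIso_app _
  exact isIso_of_reflects_iso ((jRes FR Λ).map f)
    (ObjectProperty.ι (fun M : Mod (FF FR Λ) => IsPrefragment FR Λ M) ⋙
      AdditiveFunctor.forget _ _)

/-- The canonical fully faithful functor `φ : Glid FR Λ ⥤ Prefrag FR Λ`,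
the unique functor with `Q ⋙ φ = j^*`. -/
def phiF : Glid FR Λ ⥤ Prefrag FR Λ :=
  Localization.Construction.lift (jRes FR Λ) (sigma_isInvertedBy FR Λ)

theorem phiF_fac : QF FR Λ ⋙ phiF FR Λ = jRes FR Λ :=
  Localization.Construction.fac _ _



section UniversalConstruction

variable (M : Mod (FF FR Λ))

/-- Index type for the generators of the coend `T M`. -/
abbrev TIndex : Type u := Σ α : Λ, R × (M.obj.obj (FF.of α) : Type u)

/-- The set of relations defining `T M`. -/
def TRelSet : Set (FreeAbelianGroup (TIndex FR Λ M)) :=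
  {z | (∃ (α : Λ) (r : R) (x y : M.obj.obj (FF.of α)),
          z = FreeAbelianGroup.of ⟨α, r, x + y⟩ - FreeAbelianGroup.of ⟨α, r, x⟩
              - FreeAbelianGroup.of ⟨α, r, y⟩) ∨
       (∃ (α : Λ) (r s : R) (x : M.obj.obj (FF.of α)),
          z = FreeAbelianGroup.of ⟨α, r + s, x⟩ - FreeAbelianGroup.of ⟨α, r, x⟩
              - FreeAbelianGroup.of ⟨α, s, x⟩) ∨
       (∃ (α β : Λ) (g : (FF.of β : FF FR Λ) ⟶ FF.of α) (r : R)
          (y : M.obj.obj (FF.of β)),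
          z = FreeAbelianGroup.of ⟨α, r, (M.obj.map g) y⟩
              - FreeAbelianGroup.of ⟨β, r * g.1, y⟩)}

/-- The coend `T M = ⊕_α Hom(α,∞) ⊗ M(α) / relations`. -/
def TGrp : Type u :=
  FreeAbelianGroup (TIndex FR Λ M) ⧸ AddSubgroup.closure (TRelSet FR Λ M)

instance : AddCommGroup (TGrp FR Λ M) :=
  QuotientAddGroup.Quotient.addCommGroup _

/-- The projection onto `T M`. -/
def Tpi : FreeAbelianGroup (TIndex FR Λ M) →+ TGrp FR Λ M :=
  QuotientAddGroup.mk' _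

/-- The generator of `T M` given by `α`, `r` and `x ∈ M(α)`. -/
def Tmk (α : Λ) (r : R) (x : M.obj.obj (FF.of α)) : TGrp FR Λ M :=
  Tpi FR Λ M (FreeAbelianGroup.of ⟨α, r, x⟩)

theorem Tmk_add_right (α : Λ) (r : R) (x y : M.obj.obj (FF.of α)) :
    Tmk FR Λ M α r (x + y) = Tmk FR Λ M α r x + Tmk FR Λ M α r y := by
  have h : Tpi FR Λ M (FreeAbelianGroup.of ⟨α, r, x + y⟩ - FreeAbelianGroup.of ⟨α, r, x⟩
      - FreeAbelianGroup.of ⟨α, r, y⟩) = 0 :=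
    (QuotientAddGroup.eq_zero_iff _).2
      (AddSubgroup.subset_closure (Or.inl ⟨α, r, x, y, rfl⟩))
  rw [map_sub, map_sub, sub_sub, sub_eq_zero] at h
  exact h

theorem Tmk_add_left (α : Λ) (r s : R) (x : M.obj.obj (FF.of α)) :
    Tmk FR Λ M α (r + s) x = Tmk FR Λ M α r x + Tmk FR Λ M α s x := by
  have h : Tpi FR Λ M (FreeAbelianGroup.of ⟨α, r + s, x⟩ - FreeAbelianGroup.of ⟨α, r, x⟩
      - FreeAbelianGroup.of ⟨α, s, x⟩) = 0 :=
    (QuotientAddGroup.eq_zero_iff _).2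
      (AddSubgroup.subset_closure (Or.inr (Or.inl ⟨α, r, s, x, rfl⟩)))
  rw [map_sub, map_sub, sub_sub, sub_eq_zero] at h
  exact h

theorem Tmk_comp (α β : Λ) (g : (FF.of β : FF FR Λ) ⟶ FF.of α) (r : R)
    (y : M.obj.obj (FF.of β)) :
    Tmk FR Λ M α r ((M.obj.map g) y) = Tmk FR Λ M β (r * g.1) y := by
  have h : Tpi FR Λ M (FreeAbelianGroup.of ⟨α, r, (M.obj.map g) y⟩
      - FreeAbelianGroup.of ⟨β, r * g.1, y⟩) = 0 :=
    (QuotientAddGroup.eq_zero_iff _).2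
      (AddSubgroup.subset_closure (Or.inr (Or.inr ⟨α, β, g, r, y, rfl⟩)))
  rw [map_sub, sub_eq_zero] at h
  exact h

theorem Tmk_zero_left (α : Λ) (x : M.obj.obj (FF.of α)) :
    Tmk FR Λ M α 0 x = 0 := by
  have h := Tmk_add_left FR Λ M α 0 0 x
  rw [add_zero] at h
  have h2 : Tmk FR Λ M α 0 x + 0 = Tmk FR Λ M α 0 x + Tmk FR Λ M α 0 x := by
    rw [add_zero]; exact h
  exact (add_left_cancel h2).symm

theorem Tmk_zero_right (α : Λ) (r : R) :
    Tmk FR Λ M α r (0 : M.obj.obj (FF.of α)) = 0 := by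
  have h := Tmk_add_right FR Λ M α r 0 0
  rw [add_zero] at h
  have h2 : Tmk FR Λ M α r 0 + 0 = Tmk FR Λ M α r 0 + Tmk FR Λ M α r 0 := by
    rw [add_zero]; exact h
  exact (add_left_cancel h2).symm

/-- Universal property of `T M`: lifting compatible data to a homomorphism. -/
def Tlift {A : Type u} [AddCommGroup A] (φ : ∀ α : Λ, R → M.obj.obj (FF.of α) → A)
    (h1 : ∀ (α : Λ) (r : R) (x y : M.obj.obj (FF.of α)), φ α r (x + y) = φ α r x + φ α r y)
    (h2 : ∀ (α : Λ) (r s : R) (x : M.obj.obj (FF.of α)), φ α (r + s) x = φ α r x + φ α s x)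
    (h3 : ∀ (α β : Λ) (g : (FF.of β : FF FR Λ) ⟶ FF.of α) (r : R)
      (y : M.obj.obj (FF.of β)), φ α r ((M.obj.map g) y) = φ β (r * g.1) y) :
    TGrp FR Λ M →+ A :=
  QuotientAddGroup.lift _ (FreeAbelianGroup.lift fun p => φ p.1 p.2.1 p.2.2)
    (by
      refine (AddSubgroup.closure_le _).2 ?_
      rintro z (⟨α, r, x, y, rfl⟩ | ⟨α, r, s, x, rfl⟩ | ⟨α, β, g, r, y, rfl⟩) <;>
        simp only [SetLike.mem_coe, AddMonoidHom.mem_ker, map_sub,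
          FreeAbelianGroup.lift_apply_of, h1, h2, h3 _ _ _ _ _] <;>
        abel)

@[simp]
theorem Tlift_mk {A : Type u} [AddCommGroup A] (φ : ∀ α : Λ, R → M.obj.obj (FF.of α) → A)
    (h1 : ∀ (α : Λ) (r : R) (x y : M.obj.obj (FF.of α)), φ α r (x + y) = φ α r x + φ α r y)
    (h2 : ∀ (α : Λ) (r s : R) (x : M.obj.obj (FF.of α)), φ α (r + s) x = φ α r x + φ α s x)
    (h3 : ∀ (α β : Λ) (g : (FF.of β : FF FR Λ) ⟶ FF.of α) (r : R)
      (y : M.obj.obj (FF.of β)), φ α r ((M.obj.map g) y) = φ β (r * g.1) y)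
    (α : Λ) (r : R) (x : M.obj.obj (FF.of α)) :
    Tlift FR Λ M φ h1 h2 h3 (Tmk FR Λ M α r x) = φ α r x := by
  show QuotientAddGroup.lift _ _ _ (QuotientAddGroup.mk _) = _
  rw [QuotientAddGroup.lift_mk]
  exact FreeAbelianGroup.lift_apply_of _ _

theorem Thom_ext {A : Type u} [AddCommGroup A] (f g : TGrp FR Λ M →+ A)
    (h : ∀ (α : Λ) (r : R) (x : M.obj.obj (FF.of α)),
      f (Tmk FR Λ M α r x) = g (Tmk FR Λ M α r x)) : f = g := by
  refine QuotientAddGroup.addMonoidHom_ext _ ?_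
  exact FreeAbelianGroup.lift_ext _ _ fun ⟨α, r, x⟩ => h α r x

/-- `M(α) → T M`, `x ↦ [α, 1, x]`, as a homomorphism. -/
def toThom (α : Λ) : M.obj.obj (FF.of α) →+ TGrp FR Λ M where
  toFun x := Tmk FR Λ M α 1 x
  map_zero' := Tmk_zero_right FR Λ M α 1
  map_add' x y := Tmk_add_right FR Λ M α 1 x y

/-- The torsion subgroup `K_α ⊆ M(α)`. -/
def Ksub (α : Λ) : AddSubgroup (M.obj.obj (FF.of α)) := (toThom FR Λ M α).ker

theorem mem_Ksub {α : Λ} {x : M.obj.obj (FF.of α)} :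
    x ∈ Ksub FR Λ M α ↔ Tmk FR Λ M α 1 x = 0 := Iff.rfl

/-- `M(α)/K_α`. -/
def Qgrp (α : Λ) : Type u := M.obj.obj (FF.of α) ⧸ Ksub FR Λ M α

instance (α : Λ) : AddCommGroup (Qgrp FR Λ M α) :=
  QuotientAddGroup.Quotient.addCommGroup _

/-- The action of `r ∈ R = End(∞)` on `T M`. -/
def Tact (r : R) : TGrp FR Λ M →+ TGrp FR Λ M :=
  Tlift FR Λ M (fun β s y => Tmk FR Λ M β (r * s) y)
    (fun β s x y => Tmk_add_right FR Λ M β (r * s) x y)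
    (fun β s t x => by rw [mul_add]; exact Tmk_add_left FR Λ M β _ _ x)
    (fun β γ g s y => by rw [Tmk_comp, mul_assoc])

@[simp]
theorem Tact_mk (r : R) (β : Λ) (s : R) (y : M.obj.obj (FF.of β)) :
    Tact FR Λ M r (Tmk FR Λ M β s y) = Tmk FR Λ M β (r * s) y :=
  Tlift_mk FR Λ M _ _ _ _ β s y

theorem Tmk_eq_act (α : Λ) (r : R) (x : M.obj.obj (FF.of α)) :
    Tmk FR Λ M α r x = Tact FR Λ M r (Tmk FR Λ M α 1 x) := by
  rw [Tact_mk, mul_one]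

/-- The map `M(α)/K_α → T M` induced by `r ∈ Hom(α,∞) = R`. -/
def QtoT (α : Λ) (r : R) : Qgrp FR Λ M α →+ TGrp FR Λ M :=
  QuotientAddGroup.lift _ ((Tact FR Λ M r).comp (toThom FR Λ M α))
    (fun x hx => by
      have hx' : Tmk FR Λ M α 1 x = 0 := hx
      show Tact FR Λ M r (Tmk FR Λ M α 1 x) = 0
      rw [hx', map_zero])

theorem QtoT_mk (α : Λ) (r : R) (x : M.obj.obj (FF.of α)) :
    QtoT FR Λ M α r (QuotientAddGroup.mk x) = Tmk FR Λ M α r x := by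
  show Tact FR Λ M r (Tmk FR Λ M α 1 x) = _
  rw [Tact_mk, mul_one]

/-- Reinterpret a morphism of `oFF` between objects of `Λ` as a morphism of `FF`. -/
def ffHom {α β : Λ} (σ : (OFF.of α : OFF FR Λ) ⟶ OFF.of β) :
    (FF.of α : FF FR Λ) ⟶ FF.of β := σ

theorem Qmap_aux {α β : Λ} (σ : (OFF.of α : OFF FR Λ) ⟶ OFF.of β) :
    Ksub FR Λ M α ≤ (Ksub FR Λ M β).comap (M.obj.map (ffHom FR Λ σ)).hom := by
  intro x hx
  have hx' : Tmk FR Λ M α 1 x = 0 := hx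
  show Tmk FR Λ M β 1 ((M.obj.map (ffHom FR Λ σ)) x) = 0
  rw [Tmk_comp, one_mul, Tmk_eq_act FR Λ M, hx', map_zero]

/-- The map `M(α)/K_α → M(β)/K_β` induced by a morphism `α → β`. -/
def Qmap {α β : Λ} (σ : (OFF.of α : OFF FR Λ) ⟶ OFF.of β) :
    Qgrp FR Λ M α →+ Qgrp FR Λ M β :=
  QuotientAddGroup.map _ _ (M.obj.map (ffHom FR Λ σ)).hom (Qmap_aux FR Λ M σ)

theorem Qmap_mk {α β : Λ} (σ : (OFF.of α : OFF FR Λ) ⟶ OFF.of β)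
    (x : M.obj.obj (FF.of α)) :
    Qmap FR Λ M σ (QuotientAddGroup.mk x)
      = QuotientAddGroup.mk ((M.obj.map (ffHom FR Λ σ)) x) :=
  QuotientAddGroup.map_mk _ _ _ _ _

/-- The underlying functor of the universal preglider `W M` under `M`. -/
def WFun : OFF FR Λ ⥤ AddCommGrpCat.{u} where
  obj X :=
    match X with
    | .of α => AddCommGrpCat.of (Qgrp FR Λ M α)
    | .infty => AddCommGrpCat.of (TGrp FR Λ M)
  map {X Y} σ :=
    match X, Y, σ with
    | .of _, .of _, σ => AddCommGrpCat.ofHom (Qmap FR Λ M σ)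
    | .of α, .infty, σ => AddCommGrpCat.ofHom (QtoT FR Λ M α σ.1)
    | .infty, .infty, σ => AddCommGrpCat.ofHom (Tact FR Λ M σ.1)
    | .infty, .of _, _ => 0
  map_id X := by
    cases X with
    | of α =>
      ext x
      induction x using QuotientAddGroup.induction_on with
      | H y =>
        show Qmap FR Λ M (𝟙 (OFF.of α)) (QuotientAddGroup.mk y) = QuotientAddGroup.mk y
        rw [Qmap_mk]
        have h : (ffHom FR Λ (𝟙 (OFF.of α)) : (FF.of α : FF FR Λ) ⟶ FF.of α) = 𝟙 _ := rfl
        rw [h, M.obj.map_id]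
        rfl
    | infty =>
      show AddCommGrpCat.ofHom (Tact FR Λ M 1) = 𝟙 _
      have h : Tact FR Λ M 1 = AddMonoidHom.id _ := by
        refine Thom_ext FR Λ M _ _ fun β s y => ?_
        rw [Tact_mk, one_mul]
        rfl
      rw [h]
      rfl
  map_comp {X Y Z} σ τ := by
    cases X with
    | of α =>
      cases Y with
      | of β =>
        cases Z with
        | of γ =>
          ext x
          induction x using QuotientAddGroup.induction_on with
          | H y =>
            show Qmap FR Λ M (σ ≫ τ) (QuotientAddGroup.mk y)
              = Qmap FR Λ M τ (Qmap FR Λ M σ (QuotientAddGroup.mk y))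
            rw [Qmap_mk, Qmap_mk, Qmap_mk]
            have h : (ffHom FR Λ (σ ≫ τ) : (FF.of α : FF FR Λ) ⟶ FF.of γ)
                = ffHom FR Λ σ ≫ ffHom FR Λ τ := rfl
            rw [h, M.obj.map_comp]
            rfl
        | infty =>
          ext x
          induction x using QuotientAddGroup.induction_on with
          | H y =>
            show QtoT FR Λ M α (σ ≫ τ).1 (QuotientAddGroup.mk y)
              = QtoT FR Λ M β τ.1 (Qmap FR Λ M σ (QuotientAddGroup.mk y))
            rw [Qmap_mk, QtoT_mk, QtoT_mk, Tmk_comp]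
            rfl
      | infty =>
        cases Z with
        | of γ =>
          have hτ1 : (τ.1 : R) = 0 := AddSubgroup.mem_bot.1 τ.2
          have h0 : σ ≫ τ = 0 := Subtype.ext (by show τ.1 * σ.1 = 0; rw [hτ1, zero_mul])
          rw [h0]
          show AddCommGrpCat.ofHom (Qmap FR Λ M 0) = _ ≫ (0 : _)
          rw [Limits.comp_zero]
          ext x
          induction x using QuotientAddGroup.induction_on with
          | H y =>
            show Qmap FR Λ M 0 (QuotientAddGroup.mk y) = 0
            rw [Qmap_mk]
            have h : (ffHom FR Λ (0 : (OFF.of α : OFF FR Λ) ⟶ OFF.of γ)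
                : (FF.of α : FF FR Λ) ⟶ FF.of γ) = 0 := rfl
            haveI := M.property
            rw [h, Functor.map_zero]
            rfl
        | infty =>
          ext x
          induction x using QuotientAddGroup.induction_on with
          | H y =>
            show QtoT FR Λ M α (σ ≫ τ).1 (QuotientAddGroup.mk y)
              = Tact FR Λ M τ.1 (QtoT FR Λ M α σ.1 (QuotientAddGroup.mk y))
            rw [QtoT_mk, QtoT_mk, Tact_mk]
            rfl
    | infty =>
      cases Y with
      | of β =>
        have hσ1 : (σ.1 : R) = 0 := AddSubgroup.mem_bot.1 σ.2
        cases Z with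
        | of γ =>
          show (0 : _) = (0 : _) ≫ _
          rw [Limits.zero_comp]
        | infty =>
          show AddCommGrpCat.ofHom (Tact FR Λ M (σ ≫ τ).1) = (0 : _) ≫ _
          rw [Limits.zero_comp]
          have h : ((σ ≫ τ).1 : R) = 0 := by show τ.1 * σ.1 = 0; rw [hσ1, mul_zero]
          rw [h]
          have h2 : Tact FR Λ M 0 = 0 := by
            refine Thom_ext FR Λ M _ _ fun β s y => ?_
            rw [Tact_mk, zero_mul, Tmk_zero_left]
            rfl
          rw [h2]
          rfl
      | infty =>
        cases Z with
        | of γ =>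
          show (0 : _) = _ ≫ (0 : _)
          rw [Limits.comp_zero]
        | infty =>
          refine AddCommGrpCat.hom_ext (Thom_ext FR Λ M
            ((Tact FR Λ M (σ ≫ τ).1))
            ((Tact FR Λ M τ.1).comp (Tact FR Λ M σ.1)) fun β s y => ?_)
          show Tact FR Λ M (τ.1 * σ.1) (Tmk FR Λ M β s y)
            = Tact FR Λ M τ.1 (Tact FR Λ M σ.1 (Tmk FR Λ M β s y))
          rw [Tact_mk, Tact_mk, Tact_mk, mul_assoc]

instance : (WFun FR Λ M).Additive where
  map_add {X Y f g} := by
    cases X with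
    | of α =>
      cases Y with
      | of β =>
        ext x
        induction x using QuotientAddGroup.induction_on with
        | H y =>
          show Qmap FR Λ M (f + g) (QuotientAddGroup.mk y)
            = Qmap FR Λ M f (QuotientAddGroup.mk y) + Qmap FR Λ M g (QuotientAddGroup.mk y)
          rw [Qmap_mk, Qmap_mk, Qmap_mk]
          have h : (ffHom FR Λ (f + g) : (FF.of α : FF FR Λ) ⟶ FF.of β)
              = ffHom FR Λ f + ffHom FR Λ g := rfl
          haveI := M.property
          rw [h, Functor.map_add]
          rfl
      | infty =>
        ext x
        induction x using QuotientAddGroup.induction_on with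
        | H y =>
          show QtoT FR Λ M α (f + g).1 (QuotientAddGroup.mk y)
            = QtoT FR Λ M α f.1 (QuotientAddGroup.mk y)
              + QtoT FR Λ M α g.1 (QuotientAddGroup.mk y)
          rw [QtoT_mk, QtoT_mk, QtoT_mk]
          exact Tmk_add_left FR Λ M α f.1 g.1 y
    | infty =>
      cases Y with
      | of β =>
        exact (add_zero (0 : (WFun FR Λ M).obj OFF.infty ⟶ (WFun FR Λ M).obj (OFF.of β))).symm
      | infty =>
        refine AddCommGrpCat.hom_ext (Thom_ext FR Λ M _ ((Tact FR Λ M f.1) + (Tact FR Λ M g.1)) fun β s y => ?_)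
        show Tact FR Λ M (f.1 + g.1) _ = Tact FR Λ M f.1 _ + Tact FR Λ M g.1 _
        rw [Tact_mk, Tact_mk, Tact_mk, add_mul]
        exact Tmk_add_left FR Λ M β _ _ y

/-- The universal preglider `W M` under the prefragment `M`. -/
def WObj : Preglid FR Λ :=
  ⟨⟨WFun FR Λ M, (inferInstance : (WFun FR Λ M).Additive)⟩, by
    intro X Y h
    cases X with
    | of α =>
      cases Y with
      | of β =>
        show Function.Injective (Qmap FR Λ M (unitHom FR Λ (OFF.of α) (OFF.of β) h))
        rw [injective_iff_map_eq_zero]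
        intro q
        induction q using QuotientAddGroup.induction_on with
        | H y =>
          intro hy
          rw [Qmap_mk] at hy
          have hy' : (M.obj.map (ffHom FR Λ (unitHom FR Λ (OFF.of α) (OFF.of β) h))) y
              ∈ Ksub FR Λ M β := (QuotientAddGroup.eq_zero_iff _).1 hy
          have h2 : Tmk FR Λ M α 1 y = 0 := by
            have h3 := mem_Ksub FR Λ M |>.1 hy'
            rwa [Tmk_comp, one_mul] at h3
          exact (QuotientAddGroup.eq_zero_iff _).2 h2
      | infty =>
        show Function.Injective (QtoT FR Λ M α (unitHom FR Λ (OFF.of α) OFF.infty h).1)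
        rw [injective_iff_map_eq_zero]
        intro q
        induction q using QuotientAddGroup.induction_on with
        | H y =>
          intro hy
          rw [QtoT_mk] at hy
          exact (QuotientAddGroup.eq_zero_iff _).2 hy
    | infty =>
      cases Y with
      | of β => exact h.elim
      | infty =>
        show Function.Injective (Tact FR Λ M (unitHom FR Λ OFF.infty OFF.infty h).1)
        have h1 : Tact FR Λ M 1 = AddMonoidHom.id _ := by
          refine Thom_ext FR Λ M _ _ fun β s y => ?_
          rw [Tact_mk, one_mul]
          rfl
        show Function.Injective (Tact FR Λ M 1)
        rw [h1]
        exact fun a b hab => hab⟩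

/-- The canonical morphism `α → ∞` of `oFF` given by `r : R`. -/
def infHom (α : Λ) (r : R) : (OFF.of α : OFF FR Λ) ⟶ OFF.infty :=
  ⟨r, AddSubgroup.mem_top r⟩

variable {M} in
/-- The component of a natural transformation to a restricted preglider,
as a homomorphism. -/
def gHom (P : Preglid FR Λ) (g : M.obj ⟶ jF FR Λ ⋙ P.obj.obj) (α : Λ) :
    M.obj.obj (FF.of α) →+ P.obj.obj.obj (OFF.of α) :=
  AddMonoidHom.mk' (fun x => g.app (FF.of α) x) (fun a b => by dsimp only; rw [map_add]; rfl)

/-- The evaluation homomorphism `T M → P(∞)` associated to `g : M → j^* P`. -/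
def evHom (P : Preglid FR Λ) (g : M.obj ⟶ jF FR Λ ⋙ P.obj.obj) :
    TGrp FR Λ M →+ P.obj.obj.obj OFF.infty :=
  Tlift FR Λ M (fun α r x => (P.obj.obj.map (infHom FR Λ α r)) (g.app (FF.of α) x))
    (fun α r x y => by dsimp only; exact (congrArg (P.obj.obj.map (infHom FR Λ α r)).hom (map_add (g.app (FF.of α)).hom x y)).trans (map_add _ _ _))
    (fun α r s x => by
      dsimp only
      have h : infHom FR Λ α (r + s) = infHom FR Λ α r + infHom FR Λ α s := rfl
      haveI := P.obj.property
      rw [h, Functor.map_add]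
      rfl)
    (fun α β gm r y => by
      dsimp only
      have hnat : g.app (FF.of α) ((M.obj.map gm) y)
          = (jF FR Λ ⋙ P.obj.obj).map gm (g.app (FF.of β) y) :=
        congrArg
          (fun (h : M.obj.obj (FF.of β) ⟶ (jF FR Λ ⋙ P.obj.obj).obj (FF.of α)) => h y)
          (g.naturality gm)
      rw [hnat]
      show (P.obj.obj.map ((jF FR Λ).map gm) ≫ P.obj.obj.map (infHom FR Λ α r))
        (g.app (FF.of β) y) = _
      exact (ConcreteCategory.congr_hom (P.obj.obj.map_comp ((jF FR Λ).map gm) (infHom FR Λ α r)) (g.app (FF.of β) y)).symm)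

theorem evHom_mk (P : Preglid FR Λ) (g : M.obj ⟶ jF FR Λ ⋙ P.obj.obj) (α : Λ)
    (r : R) (x : M.obj.obj (FF.of α)) :
    evHom FR Λ M P g (Tmk FR Λ M α r x)
      = (P.obj.obj.map (infHom FR Λ α r)) (g.app (FF.of α) x) :=
  Tlift_mk FR Λ M _ _ _ _ α r x

theorem Wdescend (P : Preglid FR Λ) (g : M.obj ⟶ jF FR Λ ⋙ P.obj.obj) {α : Λ}
    (x : M.obj.obj (FF.of α)) (hx : x ∈ Ksub FR Λ M α) : g.app (FF.of α) x = 0 := by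
  have h1 : Tmk FR Λ M α 1 x = 0 := hx
  have h2 : (P.obj.obj.map (infHom FR Λ α 1)) (g.app (FF.of α) x) = 0 := by
    rw [← evHom_mk FR Λ M P g α 1 x, h1, map_zero]
  have hinj := P.property (OFF.of α) OFF.infty trivial
  exact hinj (h2.trans (map_zero _).symm)

variable {M} in
/-- The component at `α` of the extension of `g` to `W M`. -/
def WextQ (P : Preglid FR Λ) (g : M.obj ⟶ jF FR Λ ⋙ P.obj.obj) (α : Λ) :
    Qgrp FR Λ M α →+ P.obj.obj.obj (OFF.of α) :=
  QuotientAddGroup.lift (Ksub FR Λ M α) (gHom FR Λ P g α)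
    (fun x hx => Wdescend FR Λ M P g x hx)

theorem WextQ_mk (P : Preglid FR Λ) (g : M.obj ⟶ jF FR Λ ⋙ P.obj.obj) (α : Λ)
    (x : M.obj.obj (FF.of α)) :
    WextQ FR Λ P g α (QuotientAddGroup.mk x) = g.app (FF.of α) x :=
  QuotientAddGroup.lift_mk _ _ _

/-- The universal arrow `M → j^*(W M)`. -/
def WunitTrans : M.obj ⟶ jF FR Λ ⋙ WFun FR Λ M where
  app X :=
    match X with
    | .of α => AddCommGrpCat.ofHom (QuotientAddGroup.mk' (Ksub FR Λ M α))
  naturality {X Y} gm := by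
    cases X with
    | of α =>
      cases Y with
      | of β =>
        ext x
        show QuotientAddGroup.mk ((M.obj.map gm) x)
          = Qmap FR Λ M gm (QuotientAddGroup.mk x)
        exact (Qmap_mk FR Λ M gm x).symm

/-- The extension of `g : M → j^* P` to a morphism `W M → P`. -/
def Wext (P : Preglid FR Λ) (g : M.obj ⟶ jF FR Λ ⋙ P.obj.obj) :
    WFun FR Λ M ⟶ P.obj.obj where
  app X :=
    match X with
    | .of α => AddCommGrpCat.ofHom (WextQ FR Λ P g α)
    | .infty => AddCommGrpCat.ofHom (evHom FR Λ M P g)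
  naturality {X Y} σ := by
    cases X with
    | of α =>
      cases Y with
      | of β =>
        ext x
        induction x using QuotientAddGroup.induction_on with
        | H y =>
          show WextQ FR Λ P g β (Qmap FR Λ M σ (QuotientAddGroup.mk y))
            = P.obj.obj.map σ (WextQ FR Λ P g α (QuotientAddGroup.mk y))
          rw [Qmap_mk, WextQ_mk, WextQ_mk]
          exact congrArg
            (fun (h : M.obj.obj (FF.of α) ⟶ (jF FR Λ ⋙ P.obj.obj).obj (FF.of β)) => h y)
            (g.naturality (ffHom FR Λ σ))
      | infty =>
        ext x
        induction x using QuotientAddGroup.induction_on with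
        | H y =>
          show evHom FR Λ M P g (QtoT FR Λ M α σ.1 (QuotientAddGroup.mk y))
            = P.obj.obj.map σ (WextQ FR Λ P g α (QuotientAddGroup.mk y))
          rw [QtoT_mk, evHom_mk, WextQ_mk]
          rfl
    | infty =>
      cases Y with
      | of β =>
        have hσ : σ = 0 := Subtype.ext (AddSubgroup.mem_bot.1 σ.2)
        rw [hσ]
        show (0 : _) ≫ _ = _ ≫ P.obj.obj.map 0
        haveI := P.obj.property
        rw [Functor.map_zero, Limits.zero_comp, Limits.comp_zero]
      | infty =>
        have key : (evHom FR Λ M P g).comp (Tact FR Λ M σ.1)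
            = (AddMonoidHom.mk' (fun t => P.obj.obj.map σ t)
                (fun a b => by dsimp only; rw [map_add])).comp (evHom FR Λ M P g) := by
          refine Thom_ext FR Λ M _ _ fun β s y => ?_
          show evHom FR Λ M P g (Tact FR Λ M σ.1 (Tmk FR Λ M β s y))
            = P.obj.obj.map σ (evHom FR Λ M P g (Tmk FR Λ M β s y))
          rw [Tact_mk, evHom_mk, evHom_mk]
          show _ = (P.obj.obj.map (infHom FR Λ β s) ≫ P.obj.obj.map σ)
            (g.app (FF.of β) y)
          rw [← P.obj.obj.map_comp]
          rfl
        ext t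
        exact DFunLike.congr_fun key t

/-- The bijection between `Hom(W M, P)` and `Hom(M, j^* P)`. -/
def WEquiv (Mfr : Prefrag FR Λ) (P : Preglid FR Λ) :
    ((WObj FR Λ Mfr.obj : Preglid FR Λ) ⟶ P) ≃ (Mfr ⟶ (jRes FR Λ).obj P) where
  toFun u :=
    ⟨⟨show Mfr.obj.obj ⟶ jF FR Λ ⋙ P.obj.obj from
      WunitTrans FR Λ Mfr.obj ≫
        Functor.whiskerLeft (jF FR Λ) (show WFun FR Λ Mfr.obj ⟶ P.obj.obj from u.hom.hom)⟩⟩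
  invFun g := ⟨⟨show WFun FR Λ Mfr.obj ⟶ P.obj.obj from
    Wext FR Λ Mfr.obj P (show Mfr.obj.obj ⟶ jF FR Λ ⋙ P.obj.obj from g.hom.hom)⟩⟩
  left_inv u := by
    refine InducedCategory.hom_ext (InducedCategory.hom_ext (NatTrans.ext (funext fun X => ?_)))
    cases X with
    | of α =>
      ext x
      induction x using QuotientAddGroup.induction_on with
      | H y =>
        show WextQ FR Λ _ _ α (QuotientAddGroup.mk y) = _
        rw [WextQ_mk]
        rfl
    | infty =>
      have key : evHom FR Λ Mfr.obj P
          (WunitTrans FR Λ Mfr.obj ≫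
            Functor.whiskerLeft (jF FR Λ) (show WFun FR Λ Mfr.obj ⟶ P.obj.obj from u.hom.hom))
          = ((show WFun FR Λ Mfr.obj ⟶ P.obj.obj from u.hom.hom).app OFF.infty).hom := by
        refine Thom_ext FR Λ Mfr.obj _ _ fun β s y => ?_
        rw [evHom_mk]
        have hnat : (show WFun FR Λ Mfr.obj ⟶ P.obj.obj from u.hom.hom).app OFF.infty
              ((WFun FR Λ Mfr.obj).map (infHom FR Λ β s) (QuotientAddGroup.mk y))
            = P.obj.obj.map (infHom FR Λ β s)
              ((show WFun FR Λ Mfr.obj ⟶ P.obj.obj from u.hom.hom).app (OFF.of β)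
                (QuotientAddGroup.mk y)) :=
          congrArg
            (fun (h : (WFun FR Λ Mfr.obj).obj (OFF.of β) ⟶ P.obj.obj.obj OFF.infty) => h
              (QuotientAddGroup.mk y))
            ((show WFun FR Λ Mfr.obj ⟶ P.obj.obj from u.hom.hom).naturality (infHom FR Λ β s))
        have hq : (WFun FR Λ Mfr.obj).map (infHom FR Λ β s) (QuotientAddGroup.mk y)
            = Tmk FR Λ Mfr.obj β s y := QtoT_mk FR Λ Mfr.obj β s y
        rw [hq] at hnat
        exact hnat.symm
      ext t
      exact DFunLike.congr_fun key t
  right_inv g := by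
    refine InducedCategory.hom_ext (InducedCategory.hom_ext (NatTrans.ext (funext fun X => ?_)))
    cases X with
    | of α =>
      ext x
      show WextQ FR Λ _ _ α (QuotientAddGroup.mk x) = _
      rw [WextQ_mk]
      rfl

theorem WEquiv_natural (Mfr : Prefrag FR Λ) (P P' : Preglid FR Λ) (v : P ⟶ P')
    (u : (WObj FR Λ Mfr.obj : Preglid FR Λ) ⟶ P) :
    WEquiv FR Λ Mfr P' (u ≫ v) = WEquiv FR Λ Mfr P u ≫ (jRes FR Λ).map v := rfl

/-- The concrete left adjoint of `j^* : Preglid → Prefrag`. -/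
def WL : Prefrag FR Λ ⥤ Preglid FR Λ :=
  Adjunction.leftAdjointOfEquiv (G := jRes FR Λ)
    (F_obj := fun Mfr => WObj FR Λ Mfr.obj) (fun Mfr P => WEquiv FR Λ Mfr P)
    (fun Mfr P P' v u => WEquiv_natural FR Λ Mfr P P' v u)

/-- The concrete adjunction `W ⊣ j^*`. -/
def Wadj : WL FR Λ ⊣ jRes FR Λ :=
  Adjunction.adjunctionOfEquivLeft _ _

end UniversalConstruction

section KeyLemmas

theorem prefrag_isIso_of_pfapp {A B : Prefrag FR Λ} (f : A ⟶ B)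
    (h : ∀ X : FF FR Λ, IsIso (pfapp FR Λ f X)) : IsIso f := by
  haveI : (AdditiveFunctor.forget (FF FR Λ) AddCommGrpCat.{u}).Faithful :=
    ObjectProperty.faithful_ι _
  haveI : ∀ X : FF FR Λ, IsIso
      (((ObjectProperty.ι (fun N : Mod (FF FR Λ) => IsPrefragment FR Λ N) ⋙
        AdditiveFunctor.forget _ _).map f).app X) := h
  haveI : IsIso ((ObjectProperty.ι (fun N : Mod (FF FR Λ) => IsPrefragment FR Λ N) ⋙
      AdditiveFunctor.forget _ _).map f) := NatIso.isIso_of_isIso_app _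
  exact isIso_of_reflects_iso f
    (ObjectProperty.ι (fun N : Mod (FF FR Λ) => IsPrefragment FR Λ N) ⋙
      AdditiveFunctor.forget _ _)

theorem Wadj_unit_isIso (N : Preglid FR Λ) :
    IsIso ((Wadj FR Λ).unit.app ((jRes FR Λ).obj N)) := by
  have hu : (Wadj FR Λ).unit.app ((jRes FR Λ).obj N)
      = WEquiv FR Λ ((jRes FR Λ).obj N) _ (𝟙 _) :=
    Adjunction.adjunctionOfEquivLeft_unit_app _ _ _
  rw [hu]
  refine prefrag_isIso_of_pfapp FR Λ _ ?_
  rintro ⟨α⟩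
  have hK : ∀ x : ((jRes FR Λ).obj N).obj.obj.obj (FF.of α),
      x ∈ Ksub FR Λ ((jRes FR Λ).obj N).obj α → x = 0 := by
    intro x hx
    exact Wdescend FR Λ ((jRes FR Λ).obj N).obj N
      (show ((jRes FR Λ).obj N).obj.obj ⟶ jF FR Λ ⋙ N.obj.obj
        from 𝟙 (((jRes FR Λ).obj N).obj.obj)) x hx
  have hbij : Function.Bijective
      (fun x : ((jRes FR Λ).obj N).obj.obj.obj (FF.of α) =>
        ((QuotientAddGroup.mk' (Ksub FR Λ ((jRes FR Λ).obj N).obj α)) x)) := by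
    constructor
    · intro a b hab
      have hab' : QuotientAddGroup.mk' (Ksub FR Λ ((jRes FR Λ).obj N).obj α) a
          = QuotientAddGroup.mk' (Ksub FR Λ ((jRes FR Λ).obj N).obj α) b := hab
      have h0 : QuotientAddGroup.mk' (Ksub FR Λ ((jRes FR Λ).obj N).obj α) (a - b) = 0 := by
        rw [map_sub, hab', sub_self]
      have h1 := (QuotientAddGroup.eq_zero_iff _).1 h0
      exact sub_eq_zero.1 (hK _ h1)
    · intro q
      exact QuotientAddGroup.mk'_surjective _ q
  exact (CategoryTheory.ConcreteCategory.isIso_iff_bijective _).2 hbij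

theorem counit_mem_sigma {L : Prefrag FR Λ ⥤ Preglid FR Λ} (adj : L ⊣ jRes FR Λ)
    (N : Preglid FR Λ) : SigmaClass FR Λ (adj.counit.app N) := by
  haveI hu0 : IsIso ((Wadj FR Λ).unit.app ((jRes FR Λ).obj N)) := Wadj_unit_isIso FR Λ N
  have htrans := Adjunction.unit_leftAdjointUniq_hom_app (Wadj FR Λ) adj ((jRes FR Λ).obj N)
  haveI hu : IsIso (adj.unit.app ((jRes FR Λ).obj N)) := by
    rw [← htrans]
    infer_instance
  have htri := adj.right_triangle_components N
  haveI hres : IsIso ((jRes FR Λ).map (adj.counit.app N)) := by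
    rw [IsIso.eq_inv_of_hom_inv_id htri]
    infer_instance
  intro α
  haveI : IsIso (((ObjectProperty.ι (fun P : Mod (FF FR Λ) => IsPrefragment FR Λ P) ⋙
      AdditiveFunctor.forget _ _).map ((jRes FR Λ).map (adj.counit.app N)))) :=
    inferInstance
  exact NatIso.isIso_app_of_isIso
    ((ObjectProperty.ι (fun P : Mod (FF FR Λ) => IsPrefragment FR Λ P) ⋙
      AdditiveFunctor.forget _ _).map ((jRes FR Λ).map (adj.counit.app N))) (FF.of α)

end KeyLemmas

section GlidAdjunction

variable (L : Prefrag FR Λ ⥤ Preglid FR Λ) (adj : L ⊣ jRes FR Λ)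

theorem phiF_map_QF {A B : Preglid FR Λ} (f : A ⟶ B) :
    (phiF FR Λ).map ((QF FR Λ).map f) = (jRes FR Λ).map f := rfl

/-- The natural transformation `j^* ∘ ψ ⟶ Q` given by the counit. -/
def glidTau : (jRes FR Λ ⋙ (L ⋙ QF FR Λ)) ⟶ QF FR Λ where
  app N := (QF FR Λ).map (adj.counit.app N)
  naturality {N N'} f := by
    show (QF FR Λ).map (L.map ((jRes FR Λ).map f)) ≫ (QF FR Λ).map (adj.counit.app N')
      = (QF FR Λ).map (adj.counit.app N) ≫ (QF FR Λ).map f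
    rw [← Functor.map_comp, ← Functor.map_comp]
    exact congrArg (QF FR Λ).map (adj.counit.naturality f)

instance : (QF FR Λ).IsLocalization (SigmaClass FR Λ) :=
  (inferInstance : ((SigmaClass FR Λ).Q).IsLocalization _)

instance liftingA : Localization.Lifting (QF FR Λ) (SigmaClass FR Λ)
    (jRes FR Λ ⋙ (L ⋙ QF FR Λ)) (phiF FR Λ ⋙ (L ⋙ QF FR Λ)) :=
  ⟨eqToIso (by
    rw [show QF FR Λ ⋙ (phiF FR Λ ⋙ (L ⋙ QF FR Λ))
      = (QF FR Λ ⋙ phiF FR Λ) ⋙ (L ⋙ QF FR Λ) from rfl, phiF_fac])⟩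

/-- The counit isomorphism of the adjunction `ψ ⊣ φ`. -/
def glidCounitIso (hsig : ∀ N, SigmaClass FR Λ (adj.counit.app N)) :
    (phiF FR Λ ⋙ (L ⋙ QF FR Λ)) ≅ 𝟭 (Glid FR Λ) :=
  haveI : ∀ N, IsIso ((glidTau FR Λ L adj).app N) := fun N =>
    (MorphismProperty.Q_inverts (SigmaClass FR Λ)) _ (hsig N)
  haveI : IsIso (glidTau FR Λ L adj) := NatIso.isIso_of_isIso_app _
  Localization.liftNatIso (QF FR Λ) (SigmaClass FR Λ) (jRes FR Λ ⋙ (L ⋙ QF FR Λ))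
    (QF FR Λ) _ _ (asIso (glidTau FR Λ L adj))

theorem glidCounitIso_hom_app (hsig : ∀ N, SigmaClass FR Λ (adj.counit.app N))
    (N : Preglid FR Λ) :
    (glidCounitIso FR Λ L adj hsig).hom.app ((QF FR Λ).obj N)
      = (QF FR Λ).map (adj.counit.app N) := by
  haveI : ∀ N, IsIso ((glidTau FR Λ L adj).app N) := fun N =>
    (MorphismProperty.Q_inverts (SigmaClass FR Λ)) _ (hsig N)
  haveI : IsIso (glidTau FR Λ L adj) := NatIso.isIso_of_isIso_app _
  have h := Localization.liftNatTrans_app (QF FR Λ) (SigmaClass FR Λ)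
    (jRes FR Λ ⋙ (L ⋙ QF FR Λ)) (QF FR Λ) (phiF FR Λ ⋙ (L ⋙ QF FR Λ)) (𝟭 _)
    (asIso (glidTau FR Λ L adj)).hom N
  have e1 : (Localization.Lifting.iso (QF FR Λ) (SigmaClass FR Λ)
      (jRes FR Λ ⋙ (L ⋙ QF FR Λ)) (phiF FR Λ ⋙ (L ⋙ QF FR Λ))).hom.app N
      = 𝟙 ((phiF FR Λ ⋙ (L ⋙ QF FR Λ)).obj ((QF FR Λ).obj N)) := rfl
  have e2 : (Localization.Lifting.iso (QF FR Λ) (SigmaClass FR Λ)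
      (QF FR Λ) (𝟭 (Glid FR Λ))).inv.app N = 𝟙 ((QF FR Λ).obj N) := rfl
  refine Eq.trans (calc (glidCounitIso FR Λ L adj hsig).hom.app ((QF FR Λ).obj N)
      = (Localization.liftNatTrans (QF FR Λ) (SigmaClass FR Λ)
          (jRes FR Λ ⋙ (L ⋙ QF FR Λ)) (QF FR Λ) (phiF FR Λ ⋙ (L ⋙ QF FR Λ)) (𝟭 _)
          (asIso (glidTau FR Λ L adj)).hom).app ((QF FR Λ).obj N) := rfl
    _ = _ := h
    _ = 𝟙 ((phiF FR Λ ⋙ (L ⋙ QF FR Λ)).obj ((QF FR Λ).obj N))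
          ≫ (asIso (glidTau FR Λ L adj)).hom.app N ≫ 𝟙 ((QF FR Λ).obj N) := by
          rw [e1, e2]
          rfl) ?_
  show 𝟙 ((jRes FR Λ ⋙ (L ⋙ QF FR Λ)).obj N) ≫ (glidTau FR Λ L adj).app N
    ≫ 𝟙 ((QF FR Λ).obj N) = (QF FR Λ).map (adj.counit.app N)
  rw [Category.id_comp, Category.comp_id]
  rfl

/-- The unit of the adjunction `ψ ⊣ φ`. -/
def glidUnit : 𝟭 (Prefrag FR Λ) ⟶ (L ⋙ QF FR Λ) ⋙ phiF FR Λ where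
  app Mx := show Mx ⟶ (jRes FR Λ).obj (L.obj Mx) from adj.unit.app Mx
  naturality {A B} f := by
    show f ≫ (show B ⟶ (jRes FR Λ).obj (L.obj B) from adj.unit.app B)
      = (show A ⟶ (jRes FR Λ).obj (L.obj A) from adj.unit.app A)
        ≫ ((L ⋙ QF FR Λ) ⋙ phiF FR Λ).map f
    have hmap : ((L ⋙ QF FR Λ) ⋙ phiF FR Λ).map f = (jRes FR Λ).map (L.map f) :=
      phiF_map_QF FR Λ (L.map f)
    rw [hmap]
    exact adj.unit.naturality f

/-- The adjunction `ψ = Q ∘ L ⊣ φ` induced by an adjunction `L ⊣ j^*` whose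
counit lies in `Σ`. -/
def glidAdjunction (hsig : ∀ N, SigmaClass FR Λ (adj.counit.app N)) :
    (L ⋙ QF FR Λ) ⊣ phiF FR Λ where
  unit := glidUnit FR Λ L adj
  counit := (glidCounitIso FR Λ L adj hsig).hom
  left_triangle_components Mx := by
    show (QF FR Λ).map (L.map (adj.unit.app Mx))
        ≫ (glidCounitIso FR Λ L adj hsig).hom.app ((QF FR Λ).obj (L.obj Mx)) = 𝟙 _
    rw [glidCounitIso_hom_app FR Λ L adj hsig (L.obj Mx), ← Functor.map_comp,
      adj.left_triangle_components Mx]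
    exact (QF FR Λ).map_id (L.obj Mx)
  right_triangle_components X := by
    obtain ⟨⟨N⟩⟩ := X
    show (glidUnit FR Λ L adj).app ((phiF FR Λ).obj ((QF FR Λ).obj N))
        ≫ (phiF FR Λ).map ((glidCounitIso FR Λ L adj hsig).hom.app ((QF FR Λ).obj N))
      = 𝟙 _
    rw [glidCounitIso_hom_app FR Λ L adj hsig N]
    show adj.unit.app ((jRes FR Λ).obj N) ≫ (jRes FR Λ).map (adj.counit.app N) = 𝟙 _
    exact adj.right_triangle_components N

end GlidAdjunction

section Statements

variable {Γ : Type u} [Group Γ] [PartialOrder Γ]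
  [CovariantClass Γ Γ (· * ·) (· ≤ ·)] [CovariantClass Γ Γ (Function.swap (· * ·)) (· ≤ ·)]
  {R : Type u} [Ring R]

/-- The functor `φ : Glid FR ⥤ Prefrag FR` (the unique functor with
`Q ⋙ φ = j^*`, constructed above as `phiF`) is fully faithful and admits a left adjoint,
namely `ψ := Q ∘ j_L` where `j_L = κ ∘ j_! ∘ η` for `κ` any left adjoint of `ι` and `j_!`
any left adjoint of `j^*`. -/
theorem statement_6 (FR : RingFiltration Γ R) (Λ : Set Γ) :
    (phiF FR Λ).Full ∧ (phiF FR Λ).Faithful ∧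
    (∀ (κ : Mod (OFF FR Λ) ⥤ Preglid FR Λ), (κ ⊣ iotaF FR Λ) →
      ∀ (jbang : Mod (FF FR Λ) ⥤ Mod (OFF FR Λ)), (jbang ⊣ jStar FR Λ) →
      Nonempty (((etaF FR Λ ⋙ jbang ⋙ κ) ⋙ QF FR Λ) ⊣ phiF FR Λ)) := by
  have hsig0 : ∀ N : Preglid FR Λ, SigmaClass FR Λ ((Wadj FR Λ).counit.app N) :=
    counit_mem_sigma FR Λ (Wadj FR Λ)
  let adjW : (WL FR Λ ⋙ QF FR Λ) ⊣ phiF FR Λ :=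
    glidAdjunction FR Λ (WL FR Λ) (Wadj FR Λ) hsig0
  haveI : IsIso adjW.counit :=
    (inferInstance : IsIso (glidCounitIso FR Λ (WL FR Λ) (Wadj FR Λ) hsig0).hom)
  have hff : (phiF FR Λ).FullyFaithful := adjW.fullyFaithfulROfIsIsoCounit
  refine ⟨hff.full, hff.faithful, ?_⟩
  intro κ hκ jbang hjb
  let adj1 : (etaF FR Λ ⋙ jbang ⋙ κ) ⊣ jRes FR Λ :=
    Adjunction.mkOfHomEquiv
      { homEquiv := fun Mfr P =>
          ((hjb.comp hκ).homEquiv Mfr.obj P).trans ((ObjectProperty.fullyFaithfulι (fun M : Mod (FF FR Λ) => IsPrefragment FR Λ M)).homEquiv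
            (X := Mfr) (Y := (jRes FR Λ).obj P)).symm
        homEquiv_naturality_left_symm := fun f g =>
          (hjb.comp hκ).homEquiv_naturality_left_symm f.hom g.hom
        homEquiv_naturality_right := fun f g =>
          InducedCategory.hom_ext ((hjb.comp hκ).homEquiv_naturality_right f g) }
  exact ⟨glidAdjunction FR Λ (etaF FR Λ ⋙ jbang ⋙ κ) adj1
    (counit_mem_sigma FR Λ adj1)⟩

end Statements

end GliderPaper
end
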